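/- Let Ω ⊆ ℝⁿ be a bounded open set, and let A, D ⊆ ℝⁿ be open sets with A nonempty, closure(A) ⊆ Ω and closure(Ω) ⊆ D, such that d := min(dist(A, ∂Ω), dist(∂D, ∂Ω)) > 0. Set T := D ∖ closure(A). Then for every measurable set E ⊆ ℝⁿ and every s ∈ (0,1), P_s^{NL}(E,Ω) ≤ 2 P_s^L(E,T) + 4 (n ω_n / s) |Ω| d^{−s}, where ω_n is the Lebesgue measure of the unit ball of ℝⁿ. -/

import Mathlib

open MeasureTheory Metric Set Filter Bornology
open scoped ENNReal Topology

/-- The fractional kernel `|x-y|^{-(n+s)}` as an extended nonnegative real. -/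
noncomputable def fracKer (n : ℕ) (s : ℝ) (x y : EuclideanSpace ℝ (Fin n)) : ℝ≥0∞ :=
  ENNReal.ofReal (‖x - y‖ ^ (-((n : ℝ) + s)))

/-- The interaction `L_s(A,B) = ∫_A ∫_B |x-y|^{-(n+s)} dy dx`. -/
noncomputable def interL (n : ℕ) (s : ℝ) (A B : Set (EuclideanSpace ℝ (Fin n))) : ℝ≥0∞ :=
  ∫⁻ x in A, ∫⁻ y in B, fracKer n s x y

/-- The local part of the `s`-fractional perimeter of `E` in `Ω`. -/
noncomputable def perL (n : ℕ) (s : ℝ) (E Ω : Set (EuclideanSpace ℝ (Fin n))) : ℝ≥0∞ :=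
  interL n s (E ∩ Ω) (Eᶜ ∩ Ω)

/-- The nonlocal part of the `s`-fractional perimeter of `E` in `Ω`. -/
noncomputable def perNL (n : ℕ) (s : ℝ) (E Ω : Set (EuclideanSpace ℝ (Fin n))) : ℝ≥0∞ :=
  interL n s (E ∩ Ω) (Eᶜ \ Ω) + interL n s (E \ Ω) (Eᶜ ∩ Ω)

/-- The `s`-fractional perimeter of `E` in `Ω`. -/
noncomputable def per (n : ℕ) (s : ℝ) (E Ω : Set (EuclideanSpace ℝ (Fin n))) : ℝ≥0∞ :=
  interL n s (E ∩ Ω) (Eᶜ ∩ Ω) + interL n s (E ∩ Ω) (Eᶜ \ Ω) + interL n s (E \ Ω) (Eᶜ ∩ Ω)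

/-- The global `s`-fractional perimeter `P_s(E) = L_s(E, Eᶜ)`. -/
noncomputable def perG (n : ℕ) (s : ℝ) (E : Set (EuclideanSpace ℝ (Fin n))) : ℝ≥0∞ :=
  interL n s E Eᶜ

/-- The measure theoretic boundary `∂⁻E`. Note `volume (ball x r) = ω_n rⁿ`. -/
def mtb (n : ℕ) (E : Set (EuclideanSpace ℝ (Fin n))) : Set (EuclideanSpace ℝ (Fin n)) :=
  {x | ∀ r > (0 : ℝ), 0 < volume (E ∩ ball x r) ∧ volume (E ∩ ball x r) < volume (ball x r)}

/-- `E` has locally finite `s`-perimeter: finite `s`-perimeter in every bounded open set. -/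
def locFinPer (n : ℕ) (s : ℝ) (E : Set (EuclideanSpace ℝ (Fin n))) : Prop :=
  ∀ Ω : Set (EuclideanSpace ℝ (Fin n)), IsOpen Ω → IsBounded Ω → per n s E Ω < ⊤

/-- The distance between two sets: `inf {dist x y : x ∈ A, y ∈ B}`. -/
noncomputable def setDist (n : ℕ) (A B : Set (EuclideanSpace ℝ (Fin n))) : ℝ :=
  sInf {d : ℝ | ∃ x ∈ A, ∃ y ∈ B, d = dist x y}

lemma fracKer_symm (n : ℕ) (s : ℝ) (x y : EuclideanSpace ℝ (Fin n)) :
    fracKer n s x y = fracKer n s y x := by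
  unfold fracKer
  rw [norm_sub_rev]

lemma measurable_fracKer (n : ℕ) (s : ℝ) :
    Measurable (Function.uncurry (fracKer n s)) := by
  unfold fracKer Function.uncurry
  fun_prop

lemma interL_mono (n : ℕ) (s : ℝ) {A B A' B' : Set (EuclideanSpace ℝ (Fin n))}
    (hA : A ⊆ A') (hB : B ⊆ B') : interL n s A B ≤ interL n s A' B' := by
  unfold interL
  exact lintegral_mono' (Measure.restrict_mono hA le_rfl)
    fun x => lintegral_mono' (Measure.restrict_mono hB le_rfl) le_rfl

lemma interL_union_left (n : ℕ) (s : ℝ) (A₁ A₂ B : Set (EuclideanSpace ℝ (Fin n))) :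
    interL n s (A₁ ∪ A₂) B ≤ interL n s A₁ B + interL n s A₂ B :=
  lintegral_union_le _ _ _

lemma interL_union_right (n : ℕ) (s : ℝ) (A B₁ B₂ : Set (EuclideanSpace ℝ (Fin n))) :
    interL n s A (B₁ ∪ B₂) ≤ interL n s A B₁ + interL n s A B₂ := by
  unfold interL
  have hm : Measurable fun x => ∫⁻ y in B₁, fracKer n s x y :=
    (measurable_fracKer n s).lintegral_prod_right
  calc ∫⁻ x in A, ∫⁻ y in B₁ ∪ B₂, fracKer n s x y
      ≤ ∫⁻ x in A, ((∫⁻ y in B₁, fracKer n s x y) + ∫⁻ y in B₂, fracKer n s x y) :=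
        lintegral_mono fun x => lintegral_union_le _ _ _
    _ = _ := lintegral_add_left hm _

lemma interL_swap (n : ℕ) (s : ℝ) (A B : Set (EuclideanSpace ℝ (Fin n))) :
    interL n s A B = interL n s B A := by
  unfold interL
  rw [lintegral_lintegral_swap ((measurable_fracKer n s).aemeasurable)]
  exact lintegral_congr fun y => lintegral_congr fun x => fracKer_symm n s x y

lemma far_integral (n : ℕ) (hn : 1 ≤ n) {s : ℝ} (hs : s ∈ Set.Ioo (0:ℝ) 1)
    (x : EuclideanSpace ℝ (Fin n)) {d : ℝ} (hd : 0 < d) :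
    ∫⁻ y in (ball x d)ᶜ, fracKer n s x y ≤
      ((n : ℝ≥0∞) * volume (ball (0 : EuclideanSpace ℝ (Fin n)) 1) / ENNReal.ofReal s) *
        ENNReal.ofReal (d ^ (-s)) := by
  obtain ⟨hs0, hs1⟩ := hs
  set α : ℝ := (n : ℝ) + s with hα
  have hn0 : (0:ℝ) < n := by exact_mod_cast hn
  have hα0 : 0 < α := by positivity
  set ω : ℝ≥0∞ := volume (ball (0 : EuclideanSpace ℝ (Fin n)) 1) with hω
  have hωfin : ω ≠ ⊤ := measure_ball_lt_top.ne
  -- kernel as ofReal of a nonneg function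
  have f_nn : 0 ≤ᵐ[volume.restrict (ball x d)ᶜ] fun y => ‖x - y‖ ^ (-α) :=
    ae_of_all _ fun y => Real.rpow_nonneg (norm_nonneg _) _
  haveI : Nontrivial (EuclideanSpace ℝ (Fin n)) :=
    Module.nontrivial_of_finrank_pos (R := ℝ) (by rw [finrank_euclideanSpace_fin]; omega)
  have hms : Measurable fun y : EuclideanSpace ℝ (Fin n) => ‖x - y‖ ^ (-α) := by fun_prop
  have f_mble : AEMeasurable (fun y => ‖x - y‖ ^ (-α)) (volume.restrict (ball x d)ᶜ) :=
    hms.aemeasurable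
  have key := lintegral_eq_lintegral_meas_lt (volume.restrict (ball x d)ᶜ) f_nn f_mble
  have hker : ∫⁻ y in (ball x d)ᶜ, fracKer n s x y
      = ∫⁻ t in Ioi (0:ℝ), (volume.restrict (ball x d)ᶜ) {y | t < ‖x - y‖ ^ (-α)} := key
  rw [hker]
  -- level sets
  have hlevel : ∀ t ∈ Ioi (0:ℝ),
      (volume.restrict (ball x d)ᶜ) {y | t < ‖x - y‖ ^ (-α)}
        = (ENNReal.ofReal ((t ^ (-α⁻¹)) ^ n) - ENNReal.ofReal (d ^ n)) * ω := by
    intro t ht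
    have ht0 : (0:ℝ) < t := ht
    set R : ℝ := t ^ (-α⁻¹) with hR
    have hR0 : 0 < R := Real.rpow_pos_of_pos ht0 _
    have hmble : MeasurableSet {y : EuclideanSpace ℝ (Fin n) | t < ‖x - y‖ ^ (-α)} :=
      measurableSet_lt measurable_const hms
    rw [Measure.restrict_apply hmble]
    have hset : {y : EuclideanSpace ℝ (Fin n) | t < ‖x - y‖ ^ (-α)} ∩ (ball x d)ᶜ
        = ball x R \ ball x d := by
      ext y
      simp only [mem_inter_iff, mem_setOf_eq, mem_diff, mem_compl_iff, mem_ball, not_lt]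
      constructor
      · rintro ⟨h1, h2⟩
        refine ⟨?_, h2⟩
        have hr0 : 0 < ‖x - y‖ := by
          have : dist y x = ‖x - y‖ := by rw [dist_comm, dist_eq_norm]
          linarith [this ▸ h2]
        have htR : t = R ^ (-α) := by
          rw [hR, ← Real.rpow_mul ht0.le]
          norm_num
          rw [inv_mul_cancel₀ hα0.ne', Real.rpow_one]
        rw [htR] at h1
        have := (Real.rpow_lt_rpow_iff_of_neg hR0 hr0 (neg_lt_zero.mpr hα0)).mp h1
        have hdy : dist y x = ‖x - y‖ := by rw [dist_comm, dist_eq_norm]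
        rw [hdy]; exact this
      · rintro ⟨h1, h2⟩
        refine ⟨?_, h2⟩
        have hdy : dist y x = ‖x - y‖ := by rw [dist_comm, dist_eq_norm]
        rw [hdy] at h1 h2
        have hr0 : 0 < ‖x - y‖ := lt_of_lt_of_le hd h2
        have htR : t = R ^ (-α) := by
          rw [hR, ← Real.rpow_mul ht0.le]
          norm_num
          rw [inv_mul_cancel₀ hα0.ne', Real.rpow_one]
        rw [htR]
        exact (Real.rpow_lt_rpow_iff_of_neg hR0 hr0 (neg_lt_zero.mpr hα0)).mpr h1
    rw [hset]
    have hballR : volume (ball x R) = ENNReal.ofReal (R ^ n) * ω := by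
      rw [Measure.addHaar_ball volume x hR0.le, finrank_euclideanSpace_fin]
    have hballd : volume (ball x d) = ENNReal.ofReal (d ^ n) * ω := by
      rw [Measure.addHaar_ball volume x hd.le, finrank_euclideanSpace_fin]
    rcases le_or_gt R d with hRd | hdR
    · have : ball x R \ ball x d = ∅ := diff_eq_empty.mpr (ball_subset_ball hRd)
      rw [this, measure_empty]
      have : ENNReal.ofReal (R ^ n) ≤ ENNReal.ofReal (d ^ n) :=
        ENNReal.ofReal_le_ofReal (pow_le_pow_left₀ hR0.le hRd n)
      rw [tsub_eq_zero_of_le this, zero_mul]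
    · rw [measure_diff (ball_subset_ball hdR.le) measurableSet_ball.nullMeasurableSet
        (hballd ▸ ENNReal.mul_ne_top ENNReal.ofReal_ne_top hωfin),
        hballR, hballd]
      exact (ENNReal.sub_mul fun _ _ => hωfin).symm
  rw [setLIntegral_congr_fun measurableSet_Ioi hlevel]
  set T : ℝ := d ^ (-α) with hT
  have hT0 : 0 < T := Real.rpow_pos_of_pos hd _
  set q : ℝ := -((n:ℝ)/α) with hq
  have hq1 : -1 < q := by
    rw [hq, neg_lt_neg_iff, div_lt_one hα0, hα]
    linarith
  have hq0 : q ≤ 0 := by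
    rw [hq, neg_nonpos]
    positivity
  have hq1' : q + 1 = s / α := by
    rw [hq, hα]
    field_simp
    ring
  have hTq : T ^ q = d ^ n := by
    rw [hT, ← Real.rpow_mul hd.le, ← Real.rpow_natCast d n]
    congr 1
    rw [hq]
    field_simp
  have hpt : ∀ t ∈ Ioi (0:ℝ),
      (ENNReal.ofReal ((t ^ (-α⁻¹)) ^ n) - ENNReal.ofReal (d ^ n)) * ω
        = (ENNReal.ofReal (t ^ q) - ENNReal.ofReal (d ^ n)) * ω := by
    intro t ht
    have : (t ^ (-α⁻¹)) ^ n = t ^ q := by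
      rw [← Real.rpow_natCast (t ^ (-α⁻¹)) n, ← Real.rpow_mul (le_of_lt ht)]
      congr 1
      rw [hq]
      field_simp
    rw [this]
  rw [setLIntegral_congr_fun measurableSet_Ioi hpt,
    lintegral_mul_const' ω _ hωfin]
  have hsplit : Ioi (0:ℝ) = Ioc 0 T ∪ Ioi T := (Ioc_union_Ioi_eq_Ioi hT0.le).symm
  rw [hsplit, lintegral_union measurableSet_Ioi Ioc_disjoint_Ioi_same]
  have hzero : ∫⁻ t in Ioi T, (ENNReal.ofReal (t ^ q) - ENNReal.ofReal (d ^ n)) = 0 := by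
    rw [setLIntegral_congr_fun measurableSet_Ioi (fun t ht => ?_), lintegral_zero]
    have h1 : t ^ q ≤ T ^ q := Real.rpow_le_rpow_of_nonpos hT0 (le_of_lt ht) hq0
    rw [hTq] at h1
    exact tsub_eq_zero_of_le (ENNReal.ofReal_le_ofReal h1)
  rw [hzero, add_zero]
  have hofsub : ∀ t ∈ Ioc (0:ℝ) T,
      (ENNReal.ofReal (t ^ q) - ENNReal.ofReal (d ^ n)) = ENNReal.ofReal (t ^ q - d ^ n) := by
    intro t ht
    exact (ENNReal.ofReal_sub _ (pow_nonneg hd.le n)).symm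
  rw [setLIntegral_congr_fun measurableSet_Ioc hofsub]
  have hInt1 : IntervalIntegrable (fun t : ℝ => t ^ q) volume 0 T :=
    intervalIntegral.intervalIntegrable_rpow' hq1
  have hIoc : IntegrableOn (fun t : ℝ => t ^ q - d ^ n) (Ioc 0 T) volume :=
    ((intervalIntegrable_iff_integrableOn_Ioc_of_le hT0.le).mp hInt1).sub
      ((integrableOn_const_iff).mpr (Or.inr measure_Ioc_lt_top))
  have hnn : 0 ≤ᵐ[volume.restrict (Ioc 0 T)] fun t : ℝ => t ^ q - d ^ n := by
    refine (ae_restrict_iff' measurableSet_Ioc).mpr (ae_of_all _ fun t ht => ?_)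
    have h1 : T ^ q ≤ t ^ q := Real.rpow_le_rpow_of_nonpos ht.1 ht.2 hq0
    rw [hTq] at h1
    show (0:ℝ) ≤ t ^ q - d ^ n
    linarith
  rw [← ofReal_integral_eq_lintegral_ofReal hIoc hnn]
  have hsne : s ≠ 0 := ne_of_gt hs0
  have hαne : α ≠ 0 := ne_of_gt hα0
  have hval : (∫ t in Ioc 0 T, (t ^ q - d ^ n)) = d ^ (-s) * ((n:ℝ) / s) := by
    rw [← intervalIntegral.integral_of_le hT0.le,
      intervalIntegral.integral_sub hInt1 intervalIntegrable_const,
      integral_rpow (Or.inl hq1), intervalIntegral.integral_const]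
    have e0 : (0:ℝ) ^ (q + 1) = 0 := Real.zero_rpow (by linarith)
    have e1 : T ^ (q+1) = d ^ (-s) := by
      rw [hT, ← Real.rpow_mul hd.le]
      congr 1
      rw [hq1']
      field_simp
    have e2 : T * d ^ n = d ^ (-s) := by
      rw [hT, ← Real.rpow_natCast d n, ← Real.rpow_add hd]
      congr 1
      rw [hα]
      ring
    rw [e0, e1, smul_eq_mul, sub_zero, sub_zero, e2, hq1', hα]
    field_simp
    ring
  rw [hval]
  have hconv : ENNReal.ofReal (d ^ (-s) * ((n:ℝ) / s)) * ω
      = ((n : ℝ≥0∞) * ω / ENNReal.ofReal s) * ENNReal.ofReal (d ^ (-s)) := by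
    rw [ENNReal.ofReal_mul (Real.rpow_nonneg hd.le _),
      ENNReal.ofReal_div_of_pos hs0, ENNReal.ofReal_natCast,
      ENNReal.div_eq_inv_mul, ENNReal.div_eq_inv_mul]
    ring
  exact le_of_eq hconv

lemma interL_far_le (n : ℕ) (hn : 1 ≤ n) {s : ℝ} (hs : s ∈ Set.Ioo (0:ℝ) 1)
    {X Y : Set (EuclideanSpace ℝ (Fin n))} (hX : MeasurableSet X) {d : ℝ} (hd : 0 < d)
    (hfar : ∀ x ∈ X, ∀ y ∈ Y, d ≤ dist x y) :
    interL n s X Y ≤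
      (((n : ℝ≥0∞) * volume (ball (0 : EuclideanSpace ℝ (Fin n)) 1) / ENNReal.ofReal s) *
        ENNReal.ofReal (d ^ (-s))) * volume X := by
  unfold interL
  calc ∫⁻ x in X, ∫⁻ y in Y, fracKer n s x y
      ≤ ∫⁻ _x in X,
          (((n : ℝ≥0∞) * volume (ball (0 : EuclideanSpace ℝ (Fin n)) 1) / ENNReal.ofReal s) *
            ENNReal.ofReal (d ^ (-s))) := by
        refine setLIntegral_mono' hX fun x hx => ?_
        refine le_trans ?_ (far_integral n hn hs x hd)
        refine lintegral_mono' (Measure.restrict_mono ?_ le_rfl) le_rfl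
        intro y hy
        simp only [mem_compl_iff, mem_ball, not_lt]
        rw [dist_comm]
        exact hfar x hx y hy
    _ = _ := setLIntegral_const _ _

lemma segment_cross (n : ℕ) (U : Set (EuclideanSpace ℝ (Fin n))) (hU : IsOpen U)
    (x : EuclideanSpace ℝ (Fin n)) (hx : x ∈ U) (y : EuclideanSpace ℝ (Fin n)) (hy : y ∉ U) :
    ∃ z ∈ frontier U, dist x z ≤ dist x y ∧ dist z y ≤ dist x y := by
  have hC : IsPreconnected (segment ℝ x y) := (convex_segment x y).isPreconnected
  have hne : (segment ℝ x y ∩ frontier U).Nonempty := by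
    by_contra h
    rw [Set.not_nonempty_iff_eq_empty] at h
    have hsub : segment ℝ x y ⊆ interior U ∪ (closure U)ᶜ := by
      intro z hz
      rcases Classical.em (z ∈ closure U) with hc | hc
      · left
        rcases Classical.em (z ∈ interior U) with hi | hi
        · exact hi
        · exfalso
          have : z ∈ segment ℝ x y ∩ frontier U := ⟨hz, hc, hi⟩
          simp [h] at this
      · right; exact hc
    have h1 : (segment ℝ x y ∩ interior U).Nonempty :=
      ⟨x, left_mem_segment ℝ x y, by rwa [hU.interior_eq]⟩
    have h2 : (segment ℝ x y ∩ (closure U)ᶜ).Nonempty := by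
      refine ⟨y, right_mem_segment ℝ x y, fun hc => ?_⟩
      have : y ∈ segment ℝ x y ∩ frontier U :=
        ⟨right_mem_segment ℝ x y, hc, fun hi => hy (interior_subset hi)⟩
      simp [h] at this
    obtain ⟨z, _, hz1, hz2⟩ :=
      hC _ _ isOpen_interior (isClosed_closure.isOpen_compl) hsub h1 h2
    exact hz2 (subset_closure (interior_subset hz1))
  obtain ⟨z, hzC, hzF⟩ := hne
  have := dist_add_dist_of_mem_segment hzC
  exact ⟨z, hzF, by linarith [dist_nonneg (x := x) (y := z), dist_nonneg (x := z) (y := y)],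
    by linarith [dist_nonneg (x := x) (y := z), dist_nonneg (x := z) (y := y)]⟩

/-- If `A, D` are open sets with `Ā ⊆ Ω`, `Ω̄ ⊆ D` and
`d := min(dist(A,∂Ω), dist(∂D,∂Ω)) > 0`, then for `T := D ∖ Ā` one has
`P_s^{NL}(E,Ω) ≤ 2 P_s^L(E,T) + 4 (n ω_n / s) |Ω| d^{-s}`. -/
theorem perNL_le_perL_tube (n : ℕ) (hn : 1 ≤ n) (s : ℝ) (hs : s ∈ Set.Ioo (0 : ℝ) 1)
    (Ω A D : Set (EuclideanSpace ℝ (Fin n))) (hΩo : IsOpen Ω) (hΩb : IsBounded Ω)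
    (hAo : IsOpen A) (hDo : IsOpen D) (hAne : A.Nonempty)
    (hAΩ : closure A ⊆ Ω) (hΩD : closure Ω ⊆ D)
    (hd : 0 < min (setDist n A (frontier Ω)) (setDist n (frontier D) (frontier Ω)))
    (E : Set (EuclideanSpace ℝ (Fin n))) (hE : MeasurableSet E) :
    perNL n s E Ω ≤
      2 * perL n s E (D \ closure A) +
        4 * ((n : ℝ≥0∞) * volume (ball (0 : EuclideanSpace ℝ (Fin n)) 1) /
              ENNReal.ofReal s) * volume Ω *
          ENNReal.ofReal
            ((min (setDist n A (frontier Ω)) (setDist n (frontier D) (frontier Ω))) ^ (-s)) := by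
  obtain ⟨hs0, hs1⟩ := hs
  set d : ℝ := min (setDist n A (frontier Ω)) (setDist n (frontier D) (frontier Ω)) with hdd
  set ω : ℝ≥0∞ := volume (ball (0 : EuclideanSpace ℝ (Fin n)) 1) with hω
  set K : ℝ≥0∞ :=
    (((n : ℝ≥0∞) * ω / ENNReal.ofReal s) * ENNReal.ofReal (d ^ (-s))) with hK
  set cA : Set (EuclideanSpace ℝ (Fin n)) := closure A with hcA
  set T : Set (EuclideanSpace ℝ (Fin n)) := D \ cA with hT
  have hbdd : ∀ S₁ S₂ : Set (EuclideanSpace ℝ (Fin n)),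
      BddBelow {r : ℝ | ∃ x ∈ S₁, ∃ y ∈ S₂, r = dist x y} := by
    rintro S₁ S₂
    exact ⟨0, by rintro r ⟨x, hx, y, hy, rfl⟩; exact dist_nonneg⟩
  have h1 : ∀ p ∈ cA, ∀ z ∈ frontier Ω, d ≤ dist p z := by
    intro p hp z hz
    have hA' : ∀ a ∈ A, d ≤ dist a z := fun a ha =>
      le_trans (min_le_left _ _) (csInf_le (hbdd _ _) ⟨a, ha, z, hz, rfl⟩)
    have hcl : cA ⊆ {p | d ≤ dist p z} :=
      closure_minimal hA' (isClosed_le continuous_const (continuous_id.dist continuous_const))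
    exact hcl hp
  have h2 : ∀ b ∈ frontier D, ∀ z ∈ frontier Ω, d ≤ dist b z := fun b hb z hz =>
    le_trans (min_le_right _ _) (csInf_le (hbdd _ _) ⟨b, hb, z, hz, rfl⟩)
  have hxy1 : ∀ x ∈ cA, ∀ y, y ∉ Ω → d ≤ dist x y := by
    intro x hx y hy
    obtain ⟨z, hz, hz1, _⟩ := segment_cross n Ω hΩo x (hAΩ hx) y hy
    exact le_trans (h1 x hx z hz) hz1
  have hxy2 : ∀ x ∈ Ω, ∀ y, y ∉ D → d ≤ dist x y := by
    intro x hx y hy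
    have hxD : x ∈ D := hΩD (subset_closure hx)
    obtain ⟨b, hb, hb1, _⟩ := segment_cross n D hDo x hxD y hy
    have hbΩ : b ∉ Ω := by
      intro hbΩ
      exact hb.2 (by rw [hDo.interior_eq]; exact hΩD (subset_closure hbΩ))
    obtain ⟨z, hz, _, hz2⟩ := segment_cross n Ω hΩo x hx b hbΩ
    have hdzb : d ≤ dist z b := by
      rw [dist_comm]
      exact h2 b hb z hz
    linarith
  have hΩm : MeasurableSet Ω := hΩo.measurableSet
  have hcAm : MeasurableSet cA := isClosed_closure.measurableSet
  have hss : s ∈ Set.Ioo (0:ℝ) 1 := ⟨hs0, hs1⟩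
  -- far chunks
  have farA : interL n s (E ∩ Ω ∩ cA) ((Eᶜ \ Ω) ∩ D) ≤ K * volume Ω := by
    refine le_trans (interL_far_le n hn hss ((hE.inter hΩm).inter hcAm) hd ?_) ?_
    · intro x hx y hy
      exact hxy1 x hx.2 y hy.1.2
    · exact mul_le_mul_right (measure_mono fun x hx => hx.1.2) _
  have farB : interL n s (E ∩ Ω) ((Eᶜ \ Ω) \ D) ≤ K * volume Ω := by
    refine le_trans (interL_far_le n hn hss (hE.inter hΩm) hd ?_) ?_
    · intro x hx y hy
      exact hxy2 x hx.2 y hy.2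
    · exact mul_le_mul_right (measure_mono fun x hx => hx.2) _
  have farA' : interL n s (Eᶜ ∩ Ω ∩ cA) ((E \ Ω) ∩ D) ≤ K * volume Ω := by
    refine le_trans (interL_far_le n hn hss ((hE.compl.inter hΩm).inter hcAm) hd ?_) ?_
    · intro x hx y hy
      exact hxy1 x hx.2 y hy.1.2
    · exact mul_le_mul_right (measure_mono fun x hx => hx.1.2) _
  have farB' : interL n s (Eᶜ ∩ Ω) ((E \ Ω) \ D) ≤ K * volume Ω := by
    refine le_trans (interL_far_le n hn hss (hE.compl.inter hΩm) hd ?_) ?_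
    · intro x hx y hy
      exact hxy2 x hx.2 y hy.2
    · exact mul_le_mul_right (measure_mono fun x hx => hx.2) _
  -- near chunks
  have near1 : interL n s ((E ∩ Ω) \ cA) ((Eᶜ \ Ω) ∩ D) ≤ perL n s E T := by
    refine interL_mono n s ?_ ?_
    · rintro x ⟨⟨hxE, hxΩ⟩, hxA⟩
      exact ⟨hxE, hΩD (subset_closure hxΩ), hxA⟩
    · rintro y ⟨⟨hyE, hyΩ⟩, hyD⟩
      exact ⟨hyE, hyD, fun hyA => hyΩ (hAΩ hyA)⟩
  have near2 : interL n s ((Eᶜ ∩ Ω) \ cA) ((E \ Ω) ∩ D) ≤ perL n s E T := by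
    have step : interL n s ((Eᶜ ∩ Ω) \ cA) ((E \ Ω) ∩ D) ≤ interL n s (Eᶜ ∩ T) (E ∩ T) := by
      refine interL_mono n s ?_ ?_
      · rintro x ⟨⟨hxE, hxΩ⟩, hxA⟩
        exact ⟨hxE, hΩD (subset_closure hxΩ), hxA⟩
      · rintro y ⟨⟨hyE, hyΩ⟩, hyD⟩
        exact ⟨hyE, hyD, fun hyA => hyΩ (hAΩ hyA)⟩
    calc interL n s ((Eᶜ ∩ Ω) \ cA) ((E \ Ω) ∩ D) ≤ interL n s (Eᶜ ∩ T) (E ∩ T) := step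
      _ = interL n s (E ∩ T) (Eᶜ ∩ T) := interL_swap n s _ _
      _ = perL n s E T := rfl
  -- term 1
  have term1 : interL n s (E ∩ Ω) (Eᶜ \ Ω) ≤ perL n s E T + (K * volume Ω + K * volume Ω) := by
    calc interL n s (E ∩ Ω) (Eᶜ \ Ω)
        = interL n s (E ∩ Ω) ((Eᶜ \ Ω) ∩ D ∪ (Eᶜ \ Ω) \ D) := by rw [inter_union_diff]
      _ ≤ interL n s (E ∩ Ω) ((Eᶜ \ Ω) ∩ D) + interL n s (E ∩ Ω) ((Eᶜ \ Ω) \ D) :=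
          interL_union_right n s _ _ _
      _ ≤ (perL n s E T + K * volume Ω) + K * volume Ω := by
          refine add_le_add ?_ farB
          calc interL n s (E ∩ Ω) ((Eᶜ \ Ω) ∩ D)
              = interL n s ((E ∩ Ω) \ cA ∪ (E ∩ Ω) ∩ cA) ((Eᶜ \ Ω) ∩ D) := by
                rw [diff_union_inter]
            _ ≤ interL n s ((E ∩ Ω) \ cA) ((Eᶜ \ Ω) ∩ D)
                  + interL n s ((E ∩ Ω) ∩ cA) ((Eᶜ \ Ω) ∩ D) := interL_union_left n s _ _ _
            _ ≤ perL n s E T + K * volume Ω := add_le_add near1 farA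
      _ = perL n s E T + (K * volume Ω + K * volume Ω) := by rw [add_assoc]
  -- term 2
  have term2 : interL n s (E \ Ω) (Eᶜ ∩ Ω) ≤ perL n s E T + (K * volume Ω + K * volume Ω) := by
    rw [interL_swap n s]
    calc interL n s (Eᶜ ∩ Ω) (E \ Ω)
        = interL n s (Eᶜ ∩ Ω) ((E \ Ω) ∩ D ∪ (E \ Ω) \ D) := by rw [inter_union_diff]
      _ ≤ interL n s (Eᶜ ∩ Ω) ((E \ Ω) ∩ D) + interL n s (Eᶜ ∩ Ω) ((E \ Ω) \ D) :=
          interL_union_right n s _ _ _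
      _ ≤ (perL n s E T + K * volume Ω) + K * volume Ω := by
          refine add_le_add ?_ farB'
          calc interL n s (Eᶜ ∩ Ω) ((E \ Ω) ∩ D)
              = interL n s ((Eᶜ ∩ Ω) \ cA ∪ (Eᶜ ∩ Ω) ∩ cA) ((E \ Ω) ∩ D) := by
                rw [diff_union_inter]
            _ ≤ interL n s ((Eᶜ ∩ Ω) \ cA) ((E \ Ω) ∩ D)
                  + interL n s ((Eᶜ ∩ Ω) ∩ cA) ((E \ Ω) ∩ D) := interL_union_left n s _ _ _
            _ ≤ perL n s E T + K * volume Ω := add_le_add near2 farA'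
      _ = perL n s E T + (K * volume Ω + K * volume Ω) := by rw [add_assoc]
  have total : perNL n s E Ω ≤ 2 * perL n s E T + 4 * (K * volume Ω) := by
    calc perNL n s E Ω = interL n s (E ∩ Ω) (Eᶜ \ Ω) + interL n s (E \ Ω) (Eᶜ ∩ Ω) := rfl
      _ ≤ (perL n s E T + (K * volume Ω + K * volume Ω))
            + (perL n s E T + (K * volume Ω + K * volume Ω)) := add_le_add term1 term2
      _ = 2 * perL n s E T + 4 * (K * volume Ω) := by ring
  refine le_trans total (le_of_eq ?_)
  rw [hK]
  ring
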